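/- There exists a universal constant K > 0 such that for every finite set Λ₀ ⊂ ℝ and every a : Λ₀ → ℂ one has limsup_{L→∞} (1/(2L)²) ∫_{−L}^{L} ∫_{−L}^{L} | ∑_{λ ∈ Λ₀} a_λ e^{i(λ x − λ² t)} |^4 dx dt ≤ K^4 · ( ∑_{λ ∈ Λ₀} |a_λ|^2 )^2. (Time-averaged L^4 Strichartz estimate for the Schrödinger evolution of Besicovitch almost-periodic data, Theorem 1.2, estimate (1.9).) -/

import Mathlib

open MeasureTheory Filter Set Complex

noncomputable def gL (c L : ℝ) : ℂ := ∫ x in Set.Icc (-L) L, Complex.exp (Complex.I * c * x)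

lemma gL_zero {L : ℝ} (hL : 0 ≤ L) : gL 0 L = 2 * L := by
  simp [gL, Real.volume_Icc]
  rw [max_eq_left (by linarith)]
  push_cast; ring

lemma gL_bound {c : ℝ} (hc : c ≠ 0) {L : ℝ} (hL : 0 ≤ L) : ‖gL c L‖ ≤ 2 / |c| := by
  have h1 : (-L : ℝ) ≤ L := by linarith
  have hIc : (Complex.I * c) ≠ 0 := by
    simp [Complex.I_ne_zero, Complex.ofReal_eq_zero, hc]
  have : gL c L = ∫ x in (-L)..L, Complex.exp ((Complex.I * c) * x) := by
    rw [gL, intervalIntegral.integral_of_le h1, ← MeasureTheory.integral_Icc_eq_integral_Ioc]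
  rw [this, integral_exp_mul_complex hIc]
  rw [norm_div]
  have hnorm : ∀ y : ℝ, ‖Complex.exp (Complex.I * c * y)‖ = 1 := by
    intro y
    rw [Complex.norm_exp]
    simp [Complex.mul_re]
  have h2 : ‖Complex.exp (Complex.I * c * L) - Complex.exp (Complex.I * c * (-L : ℝ))‖ ≤ 2 := by
    calc _ ≤ ‖Complex.exp (Complex.I * c * L)‖ + ‖Complex.exp (Complex.I * c * (-L:ℝ))‖ := norm_sub_le _ _
    _ ≤ 2 := by rw [hnorm, hnorm]; norm_num
  have h3 : ‖Complex.I * (c:ℂ)‖ = |c| := by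
    simp
  rw [h3]
  gcongr

lemma avg_tendsto (c : ℝ) :
    Tendsto (fun L : ℝ => (1 / (2 * L) : ℂ) * gL c L) atTop
      (nhds (if c = 0 then 1 else 0)) := by
  by_cases hc : c = 0
  · simp only [hc, if_pos rfl]
    have : ∀ᶠ L : ℝ in atTop, (1 / (2 * L) : ℂ) * gL 0 L = 1 := by
      filter_upwards [eventually_gt_atTop 0] with L hL
      rw [gL_zero hL.le]
      have : (2 * L : ℂ) ≠ 0 := by
        simp only [ne_eq, mul_eq_zero, not_or]
        constructor <;> [norm_num; exact_mod_cast hL.ne']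
      field_simp
      exact div_self (by exact_mod_cast hL.ne')
    exact Tendsto.congr' (this.mono fun L h => h.symm) tendsto_const_nhds
  · simp only [if_neg hc]
    refine squeeze_zero_norm' (a := fun L : ℝ => (1 / (2 * L)) * (2 / |c|)) ?_ ?_
    · filter_upwards [eventually_gt_atTop 0] with L hL
      rw [norm_mul]
      have h1 : ‖(1 / (2 * L) : ℂ)‖ = 1 / (2 * L) := by
        rw [show ((1 : ℂ) / (2 * L)) = ((1 / (2 * L) : ℝ) : ℂ) by push_cast; ring,
          Complex.norm_real, Real.norm_eq_abs, abs_of_pos (by positivity)]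
      rw [h1]
      have := gL_bound hc hL.le (L := L)
      have hpos : 0 ≤ 1 / (2 * L) := by positivity
      exact mul_le_mul_of_nonneg_left this hpos
    · have : Tendsto (fun L : ℝ => 1 / (2 * L)) atTop (nhds 0) := by
        have := Filter.Tendsto.const_mul (1/2 : ℝ) tendsto_inv_atTop_zero
        simpa [one_div, mul_comm, mul_assoc, mul_inv] using
          (tendsto_inv_atTop_zero.const_mul (1/2 : ℝ))
      simpa using this.mul_const (2 / |c|)

lemma exp_combine (r1 r2 r3 r4 : ℝ) :
    Complex.exp (Complex.I * (r1 : ℂ)) * Complex.exp (Complex.I * (r2 : ℂ)) *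
      ((starRingEnd ℂ) (Complex.exp (Complex.I * (r3 : ℂ))) *
       (starRingEnd ℂ) (Complex.exp (Complex.I * (r4 : ℂ)))) =
    Complex.exp (Complex.I * ((r1 + r2 - r3 - r4 : ℝ) : ℂ)) := by
  rw [← Complex.exp_conj, ← Complex.exp_conj, ← Complex.exp_add, ← Complex.exp_add,
    ← Complex.exp_add]
  congr 1
  simp only [map_mul, Complex.conj_I, Complex.conj_ofReal]
  push_cast; ring

lemma exp_split (u v : ℝ) :
    Complex.exp (Complex.I * ((u + v : ℝ) : ℂ)) =
      Complex.exp (Complex.I * (u : ℂ)) * Complex.exp (Complex.I * (v : ℂ)) := by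
  rw [← Complex.exp_add]; congr 1; push_cast; ring

lemma pointwise (Λ₀ : Finset ℝ) (a : ℝ → ℂ) (x t : ℝ) :
    ‖∑ lam ∈ Λ₀, a lam * Complex.exp (Complex.I * ((lam * x - lam ^ 2 * t : ℝ) : ℂ))‖ ^ 4
    = (∑ q ∈ (Λ₀ ×ˢ Λ₀) ×ˢ (Λ₀ ×ˢ Λ₀),
        (a q.1.1 * a q.1.2 * (starRingEnd ℂ) (a q.2.1) * (starRingEnd ℂ) (a q.2.2)) *
          (Complex.exp (Complex.I *
              ((-(q.1.1 ^ 2 + q.1.2 ^ 2 - q.2.1 ^ 2 - q.2.2 ^ 2) * t : ℝ) : ℂ)) *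
           Complex.exp (Complex.I *
              (((q.1.1 + q.1.2 - q.2.1 - q.2.2) * x : ℝ) : ℂ)))).re := by
  set S := ∑ lam ∈ Λ₀, a lam * Complex.exp (Complex.I * ((lam * x - lam ^ 2 * t : ℝ) : ℂ)) with hS
  have h1 : S * S = ∑ p ∈ Λ₀ ×ˢ Λ₀,
      (a p.1 * Complex.exp (Complex.I * ((p.1 * x - p.1 ^ 2 * t : ℝ) : ℂ))) *
      (a p.2 * Complex.exp (Complex.I * ((p.2 * x - p.2 ^ 2 * t : ℝ) : ℂ))) := by
    rw [hS, Finset.sum_mul_sum, Finset.sum_product]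
  have h2 : (starRingEnd ℂ) (S * S) = ∑ p ∈ Λ₀ ×ˢ Λ₀,
      ((starRingEnd ℂ) (a p.1) *
        (starRingEnd ℂ) (Complex.exp (Complex.I * ((p.1 * x - p.1 ^ 2 * t : ℝ) : ℂ)))) *
      ((starRingEnd ℂ) (a p.2) *
        (starRingEnd ℂ) (Complex.exp (Complex.I * ((p.2 * x - p.2 ^ 2 * t : ℝ) : ℂ)))) := by
    rw [h1, map_sum]
    exact Finset.sum_congr rfl fun p _ => by simp only [map_mul]
  have key : (∑ q ∈ (Λ₀ ×ˢ Λ₀) ×ˢ (Λ₀ ×ˢ Λ₀),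
        (a q.1.1 * a q.1.2 * (starRingEnd ℂ) (a q.2.1) * (starRingEnd ℂ) (a q.2.2)) *
          (Complex.exp (Complex.I *
              ((-(q.1.1 ^ 2 + q.1.2 ^ 2 - q.2.1 ^ 2 - q.2.2 ^ 2) * t : ℝ) : ℂ)) *
           Complex.exp (Complex.I *
              (((q.1.1 + q.1.2 - q.2.1 - q.2.2) * x : ℝ) : ℂ)))) =
      (S * S) * (starRingEnd ℂ) (S * S) := by
    rw [h2, h1, Finset.sum_mul_sum, Finset.sum_product]
    refine Finset.sum_congr rfl fun p _ => Finset.sum_congr rfl fun p' _ => ?_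
    obtain ⟨l, m⟩ := p
    obtain ⟨n, r⟩ := p'
    have e1 := exp_combine (l * x - l ^ 2 * t) (m * x - m ^ 2 * t)
      (n * x - n ^ 2 * t) (r * x - r ^ 2 * t)
    have e2 : (l * x - l ^ 2 * t) + (m * x - m ^ 2 * t) - (n * x - n ^ 2 * t)
        - (r * x - r ^ 2 * t)
        = (-(l ^ 2 + m ^ 2 - n ^ 2 - r ^ 2) * t) + ((l + m - n - r) * x) := by ring
    rw [e2, exp_split] at e1
    rw [← e1]
    ring
  rw [key, Complex.mul_conj]
  rw [Complex.normSq_eq_norm_sq]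
  simp only [Complex.ofReal_re]
  rw [norm_mul]
  ring

lemma int_c (c0 : ℂ) (al L : ℝ) :
    ∫ x in Set.Icc (-L) L, c0 * Complex.exp (Complex.I * ((al * x : ℝ) : ℂ))
      = c0 * gL al L := by
  have h : ∀ x : ℝ, Complex.exp (Complex.I * ((al * x : ℝ) : ℂ))
      = Complex.exp (Complex.I * al * x) := by
    intro x; congr 1; push_cast; ring
  simp only [h]
  rw [MeasureTheory.integral_const_mul]
  rfl

lemma cont_exp (al : ℝ) : Continuous fun x : ℝ =>
    Complex.exp (Complex.I * ((al * x : ℝ) : ℂ)) := by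
  fun_prop

lemma int_re {f : ℝ → ℂ} {s : Set ℝ} (hf : MeasureTheory.IntegrableOn f s) :
    ∫ x in s, (f x).re = (∫ x in s, f x).re :=
  (Complex.reCLM.integral_comp_comm hf).symm ▸ rfl

def cQ (a : ℝ → ℂ) (q : (ℝ × ℝ) × ℝ × ℝ) : ℂ :=
  a q.1.1 * a q.1.2 * (starRingEnd ℂ) (a q.2.1) * (starRingEnd ℂ) (a q.2.2)

def alQ (q : (ℝ × ℝ) × ℝ × ℝ) : ℝ := q.1.1 + q.1.2 - q.2.1 - q.2.2

def beQ (q : (ℝ × ℝ) × ℝ × ℝ) : ℝ := -(q.1.1 ^ 2 + q.1.2 ^ 2 - q.2.1 ^ 2 - q.2.2 ^ 2)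

lemma pointwise' (Λ₀ : Finset ℝ) (a : ℝ → ℂ) (x t : ℝ) :
    ‖∑ lam ∈ Λ₀, a lam * Complex.exp (Complex.I * ((lam * x - lam ^ 2 * t : ℝ) : ℂ))‖ ^ 4
    = (∑ q ∈ (Λ₀ ×ˢ Λ₀) ×ˢ (Λ₀ ×ˢ Λ₀),
        cQ a q * (Complex.exp (Complex.I * ((beQ q * t : ℝ) : ℂ)) *
          Complex.exp (Complex.I * ((alQ q * x : ℝ) : ℂ)))).re := by
  simpa only [cQ, alQ, beQ] using pointwise Λ₀ a x t

lemma main_eq (Λ₀ : Finset ℝ) (a : ℝ → ℂ) {L : ℝ} (hL : 0 < L) :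
    (1 / (2 * L) ^ 2) * (∫ t in Set.Icc (-L) L, ∫ x in Set.Icc (-L) L,
        ‖∑ lam ∈ Λ₀, a lam *
          Complex.exp (Complex.I * ((lam * x - lam ^ 2 * t : ℝ) : ℂ))‖ ^ 4)
    = (∑ q ∈ (Λ₀ ×ˢ Λ₀) ×ˢ (Λ₀ ×ˢ Λ₀),
        cQ a q * ((1 / (2 * L) : ℂ) * gL (beQ q) L) *
          ((1 / (2 * L) : ℂ) * gL (alQ q) L)).re := by
  simp only [pointwise' Λ₀ a]
  have hinner : ∀ t : ℝ,
      (∫ x in Set.Icc (-L) L, (∑ q ∈ (Λ₀ ×ˢ Λ₀) ×ˢ (Λ₀ ×ˢ Λ₀),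
        cQ a q * (Complex.exp (Complex.I * ((beQ q * t : ℝ) : ℂ)) *
          Complex.exp (Complex.I * ((alQ q * x : ℝ) : ℂ)))).re)
      = ∑ q ∈ (Λ₀ ×ˢ Λ₀) ×ˢ (Λ₀ ×ˢ Λ₀),
          ((cQ a q * gL (alQ q) L) *
            Complex.exp (Complex.I * ((beQ q * t : ℝ) : ℂ))).re := by
    intro t
    simp only [Complex.re_sum, ← mul_assoc]
    rw [MeasureTheory.integral_finset_sum]
    · refine Finset.sum_congr rfl fun q _ => ?_
      rw [int_re (f := fun x : ℝ => cQ a q * Complex.exp (Complex.I * ((beQ q * t : ℝ) : ℂ)) *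
          Complex.exp (Complex.I * ((alQ q * x : ℝ) : ℂ))) ((((continuous_const.mul (cont_exp (alQ q))).integrableOn_Icc))),
        int_c]
      exact congrArg Complex.re (by ring)
    · intro q _
      exact (Complex.continuous_re.comp
        (continuous_const.mul (cont_exp (alQ q)))).integrableOn_Icc
  simp only [hinner]
  rw [MeasureTheory.integral_finset_sum]
  · rw [Complex.re_sum, Finset.mul_sum]
    refine Finset.sum_congr rfl fun q _ => ?_
    rw [int_re (f := fun x : ℝ => cQ a q * gL (alQ q) L *
      Complex.exp (Complex.I * ((beQ q * x : ℝ) : ℂ)))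
      ((continuous_const.mul (cont_exp (beQ q))).integrableOn_Icc), int_c]
    rw [← Complex.re_ofReal_mul]
    exact congrArg Complex.re (by push_cast; ring)
  · intro q _
    exact (Complex.continuous_re.comp
      (continuous_const.mul (cont_exp (beQ q)))).integrableOn_Icc

lemma norm_cQ_diag (a : ℝ → ℂ) (p : ℝ × ℝ) :
    ‖cQ a (p, p)‖ = ‖a p.1‖ ^ 2 * ‖a p.2‖ ^ 2 := by
  simp only [cQ]
  rw [norm_mul, norm_mul, norm_mul, RCLike.norm_conj, RCLike.norm_conj]
  ring

lemma norm_cQ_swap (a : ℝ → ℂ) (p : ℝ × ℝ) :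
    ‖cQ a (p, (p.2, p.1))‖ = ‖a p.1‖ ^ 2 * ‖a p.2‖ ^ 2 := by
  simp only [cQ]
  rw [norm_mul, norm_mul, norm_mul, RCLike.norm_conj, RCLike.norm_conj]
  ring

theorem averaged_L4_strichartz_schrodinger :
    ∃ K : ℝ, 0 < K ∧ ∀ (Λ₀ : Finset ℝ) (a : ℝ → ℂ),
      limsup (fun L : ℝ =>
          (1 / (2 * L) ^ 2) * ∫ t in Set.Icc (-L) L, ∫ x in Set.Icc (-L) L,
            ‖∑ lam ∈ Λ₀, a lam *
              Complex.exp (Complex.I * ((lam * x - lam ^ 2 * t : ℝ) : ℂ))‖ ^ 4) atTop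
        ≤ K ^ 4 * (∑ lam ∈ Λ₀, ‖a lam‖ ^ 2) ^ 2 := by
  classical
  refine ⟨2, by norm_num, fun Λ₀ a => ?_⟩
  set M : ℂ := ∑ q ∈ (Λ₀ ×ˢ Λ₀) ×ˢ (Λ₀ ×ˢ Λ₀),
      cQ a q * (if beQ q = 0 then 1 else 0) * (if alQ q = 0 then 1 else 0) with hM
  have hH : Tendsto (fun L : ℝ => ∑ q ∈ (Λ₀ ×ˢ Λ₀) ×ˢ (Λ₀ ×ˢ Λ₀),
      cQ a q * ((1 / (2 * L) : ℂ) * gL (beQ q) L) *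
        ((1 / (2 * L) : ℂ) * gL (alQ q) L)) atTop (nhds M) := by
    rw [hM]
    exact tendsto_finset_sum _ fun q _ =>
      (tendsto_const_nhds.mul (avg_tendsto (beQ q))).mul (avg_tendsto (alQ q))
  have hT : Tendsto (fun L : ℝ =>
      (1 / (2 * L) ^ 2) * ∫ t in Set.Icc (-L) L, ∫ x in Set.Icc (-L) L,
        ‖∑ lam ∈ Λ₀, a lam *
          Complex.exp (Complex.I * ((lam * x - lam ^ 2 * t : ℝ) : ℂ))‖ ^ 4) atTop
      (nhds M.re) := by
    refine Tendsto.congr' ?_ ((Complex.continuous_re.tendsto M).comp hH)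
    filter_upwards [eventually_gt_atTop 0] with L hL
    exact (main_eq Λ₀ a hL).symm
  rw [hT.limsup_eq]
  -- Now bound M.re
  have hbound : M.re ≤ 2 * (∑ lam ∈ Λ₀, ‖a lam‖ ^ 2) ^ 2 := by
    have step1 : M.re ≤ ∑ q ∈ (Λ₀ ×ˢ Λ₀) ×ˢ (Λ₀ ×ˢ Λ₀),
        ((if q.2 = q.1 then ‖cQ a q‖ else 0) +
         (if q.2 = (q.1.2, q.1.1) then ‖cQ a q‖ else 0)) := by
      rw [hM, Complex.re_sum]
      refine Finset.sum_le_sum fun q _ => ?_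
      by_cases hb : beQ q = 0
      · by_cases ha : alQ q = 0
        · rw [if_pos hb, if_pos ha, mul_one, mul_one]
          obtain ⟨⟨l, m⟩, n, r⟩ := q
          have h1 : l + m - n - r = 0 := ha
          have h2 : l ^ 2 + m ^ 2 - n ^ 2 - r ^ 2 = 0 := by
            have := hb; simp only [beQ, neg_eq_zero] at this; exact this
          have h5 : (n - l) * (n - m) = 0 := by
            linear_combination ((l + m - n + r) / 2) * h1 - (1 / 2) * h2
          have hre : (cQ a ((l, m), (n, r))).re ≤ ‖cQ a ((l, m), (n, r))‖ := by
            exact Complex.re_le_norm _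
          have hcase : ((n, r) : ℝ × ℝ) = (l, m) ∨ ((n, r) : ℝ × ℝ) = (m, l) := by
            rcases mul_eq_zero.mp h5 with h | h
            · left; have hn : n = l := by linarith
              have hr : r = m := by rw [hn] at h1; linarith
              rw [hn, hr]
            · right; have hn : n = m := by linarith
              have hr : r = l := by rw [hn] at h1; linarith
              rw [hn, hr]
          show (cQ a ((l, m), (n, r))).re ≤
            (if ((n, r) : ℝ × ℝ) = (l, m) then ‖cQ a ((l, m), (n, r))‖ else 0) +
            (if ((n, r) : ℝ × ℝ) = (m, l) then ‖cQ a ((l, m), (n, r))‖ else 0)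
          rcases hcase with h | h
          · rw [if_pos h]
            have e2 : (0:ℝ) ≤ if ((n, r) : ℝ × ℝ) = (m, l)
                then ‖cQ a ((l, m), (n, r))‖ else 0 := by
              split
              · exact norm_nonneg _
              · exact le_rfl
            linarith
          · rw [if_pos h]
            have e2 : (0:ℝ) ≤ if ((n, r) : ℝ × ℝ) = (l, m)
                then ‖cQ a ((l, m), (n, r))‖ else 0 := by
              split
              · exact norm_nonneg _
              · exact le_rfl
            linarith
        · rw [if_neg ha, mul_zero, Complex.zero_re]
          have e1 : (0:ℝ) ≤ if q.2 = q.1 then ‖cQ a q‖ else 0 := by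
            split
            · exact norm_nonneg _
            · exact le_rfl
          have e2 : (0:ℝ) ≤ if q.2 = (q.1.2, q.1.1) then ‖cQ a q‖ else 0 := by
            split
            · exact norm_nonneg _
            · exact le_rfl
          exact add_nonneg e1 e2
      · rw [if_neg hb, mul_zero, zero_mul, Complex.zero_re]
        have e1 : (0:ℝ) ≤ if q.2 = q.1 then ‖cQ a q‖ else 0 := by
          split
          · exact norm_nonneg _
          · exact le_rfl
        have e2 : (0:ℝ) ≤ if q.2 = (q.1.2, q.1.1) then ‖cQ a q‖ else 0 := by
          split
          · exact norm_nonneg _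
          · exact le_rfl
        exact add_nonneg e1 e2
    have diag : ∑ q ∈ (Λ₀ ×ˢ Λ₀) ×ˢ (Λ₀ ×ˢ Λ₀),
        (if q.2 = q.1 then ‖cQ a q‖ else 0) = (∑ lam ∈ Λ₀, ‖a lam‖ ^ 2) ^ 2 := by
      rw [Finset.sum_product]
      have : ∀ p ∈ Λ₀ ×ˢ Λ₀, (∑ p' ∈ Λ₀ ×ˢ Λ₀,
          if p' = p then ‖cQ a (p, p')‖ else 0) = ‖cQ a (p, p)‖ := by
        intro p hp
        rw [Finset.sum_ite_eq' (Λ₀ ×ˢ Λ₀) p (fun p' => ‖cQ a (p, p')‖), if_pos hp]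
      rw [Finset.sum_congr rfl this]
      rw [sq, Finset.sum_mul_sum, ← Finset.sum_product']
      exact Finset.sum_congr rfl fun p _ => norm_cQ_diag a p
    have swap : ∑ q ∈ (Λ₀ ×ˢ Λ₀) ×ˢ (Λ₀ ×ˢ Λ₀),
        (if q.2 = (q.1.2, q.1.1) then ‖cQ a q‖ else 0)
          = (∑ lam ∈ Λ₀, ‖a lam‖ ^ 2) ^ 2 := by
      rw [Finset.sum_product]
      have : ∀ p ∈ Λ₀ ×ˢ Λ₀, (∑ p' ∈ Λ₀ ×ˢ Λ₀,
          if p' = (p.2, p.1) then ‖cQ a (p, p')‖ else 0) = ‖cQ a (p, (p.2, p.1))‖ := by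
        intro p hp
        rw [Finset.sum_ite_eq' (Λ₀ ×ˢ Λ₀) (p.2, p.1) (fun p' => ‖cQ a (p, p')‖)]
        rw [if_pos]
        rw [Finset.mem_product] at hp ⊢
        exact ⟨hp.2, hp.1⟩
      rw [Finset.sum_congr rfl this]
      rw [sq, Finset.sum_mul_sum, ← Finset.sum_product']
      exact Finset.sum_congr rfl fun p _ => norm_cQ_swap a p
    calc M.re ≤ _ := step1
      _ = (∑ lam ∈ Λ₀, ‖a lam‖ ^ 2) ^ 2 + (∑ lam ∈ Λ₀, ‖a lam‖ ^ 2) ^ 2 := by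
        rw [Finset.sum_add_distrib, diag, swap]
      _ = 2 * (∑ lam ∈ Λ₀, ‖a lam‖ ^ 2) ^ 2 := by ring
  have hsq : (0:ℝ) ≤ (∑ lam ∈ Λ₀, ‖a lam‖ ^ 2) ^ 2 := sq_nonneg _
  nlinarith [hbound, hsq]
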